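/- Starting from the partition τ = (k-1, k-1, k-2, k-3, ..., 3, 2, 1, 1) of n = k(k+1)/2 (for k ≥ 2), the minimal s with B^s(τ) = (k, k-1, ..., 2, 1) equals k(k-1). -/
import Mathlib

/-- A partition of `n`: a multiset of positive integers summing to `n`
(multisets model nonincreasing sequences, since order is irrelevant). -/
def IsPartition (n : ℕ) (l : Multiset ℕ) : Prop :=
  l.sum = n ∧ ∀ x ∈ l, 0 < x

/-- The Bulgarian solitaire move: remove one card from each pile, discard empty
piles, and add a new pile whose size is the number of old piles. -/
def bulg (l : Multiset ℕ) : Multiset ℕ :=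
  (Multiset.card l ::ₘ l.map (· - 1)).filter (0 < ·)

/-- The staircase partition `(k, k-1, …, 2, 1)`. -/
def staircase (k : ℕ) : Multiset ℕ := (Multiset.range k).map (· + 1)

/-- Toom's partition τ = (k-1, k-1, k-2, …, 2, 1, 1) of n = k(k+1)/2. -/
def tau (k : ℕ) : Multiset ℕ := (k - 1) ::ₘ 1 ::ₘ staircase (k - 1)

/-- Near-staircase state: staircase with a card moved from pile `p` to pile `q`. -/
def D (k p q : ℕ) : Multiset ℕ :=
  ((p - 1) ::ₘ (q + 1) ::ₘ (((Multiset.range (k+1)).erase p).erase q)).filter (0 < ·)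

lemma range_shift (n : ℕ) :
    Multiset.range (n+1) = 0 ::ₘ (Multiset.range n).map (· + 1) := by
  induction n with
  | zero => rfl
  | succ n ih =>
      calc Multiset.range (n+1+1) = (n+1) ::ₘ Multiset.range (n+1) :=
            Multiset.range_succ _
        _ = (n+1) ::ₘ 0 ::ₘ (Multiset.range n).map (· + 1) := by rw [ih]
        _ = 0 ::ₘ (Multiset.range (n+1)).map (· + 1) := by
            rw [Multiset.range_succ, Multiset.map_cons, Multiset.cons_swap]

lemma succ_inj : Function.Injective (· + 1 : ℕ → ℕ) := fun a b => by simp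

lemma filterpos_map_succ (t : Multiset ℕ) :
    (t.map (· + 1)).filter (0 < ·) = t.map (· + 1) := by
  rw [Multiset.filter_eq_self]
  intro a ha
  obtain ⟨b, _, rfl⟩ := Multiset.mem_map.1 ha
  omega

lemma map_pred_map_succ (t : Multiset ℕ) :
    (t.map (· + 1)).map (· - 1) = t := by
  rw [Multiset.map_map]
  have h : ((· - 1) ∘ (· + 1) : ℕ → ℕ) = id := funext fun x => by simp
  rw [h, Multiset.map_id]

lemma staircase_eq_filter (k : ℕ) :
    staircase k = (Multiset.range (k+1)).filter (0 < ·) := by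
  rw [range_shift, Multiset.filter_cons_of_neg _ (by omega), filterpos_map_succ, staircase]

lemma erase_erase (k p q : ℕ) (hp : 1 ≤ p) (hq : 1 ≤ q) :
    (((Multiset.range (k+1)).erase p).erase q)
      = 0 ::ₘ ((((Multiset.range k).erase (p-1)).erase (q-1)).map (· + 1)) := by
  rw [range_shift, Multiset.erase_cons_tail _ (by omega),
    Multiset.erase_cons_tail _ (by omega),
    show p = (p-1)+1 by omega, show q = (q-1)+1 by omega,
    ← Multiset.map_erase _ succ_inj, ← Multiset.map_erase _ succ_inj]
  simp

lemma tau_eq_D (k : ℕ) (hk : 2 ≤ k) : tau k = D k k 0 := by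
  have h1 : ((Multiset.range (k+1)).erase k).erase 0
      = ((Multiset.range (k-1)).map (· + 1)) := by
    rw [Multiset.range_succ, Multiset.erase_cons_head, show k = (k-1)+1 by omega,
      range_shift, Multiset.erase_cons_head]
    simp
  rw [D, h1, Multiset.filter_cons_of_pos _ (by omega),
    Multiset.filter_cons_of_pos _ (by omega), filterpos_map_succ]
  rfl

lemma D_staircase (k p : ℕ) (hp1 : 1 ≤ p) (hpk : p ≤ k) :
    D k p (p-1) = staircase k := by
  have hpR : p ∈ Multiset.range (k+1) := Multiset.mem_range.2 (by omega)
  have hp1R : p - 1 ∈ (Multiset.range (k+1)).erase p :=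
    (Multiset.mem_erase_of_ne (by omega)).2 (Multiset.mem_range.2 (by omega))
  rw [D, show p-1+1 = p by omega, Multiset.cons_swap, Multiset.cons_erase hp1R,
    Multiset.cons_erase hpR, ← staircase_eq_filter]

lemma stepA (k p q : ℕ) (hp2 : 2 ≤ p) (hpk : p ≤ k) (hq1 : 1 ≤ q) (hqk : q ≤ k)
    (hpq : p ≠ q) : bulg (D k p q) = D k (p-1) (q-1) := by
  set F := ((Multiset.range k).erase (p-1)).erase (q-1) with hF
  have hD : D k p q = (p-1) ::ₘ (q+1) ::ₘ F.map (· + 1) := by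
    rw [D, erase_erase k p q (by omega) (by omega),
      Multiset.filter_cons_of_pos _ (by omega), Multiset.filter_cons_of_pos _ (by omega),
      Multiset.filter_cons_of_neg _ (by omega), filterpos_map_succ]
  have hcardF : Multiset.card F = k - 2 := by
    have h1 : (p-1) ∈ Multiset.range k := Multiset.mem_range.2 (by omega)
    have h2 : (q-1) ∈ (Multiset.range k).erase (p-1) :=
      (Multiset.mem_erase_of_ne (by omega)).2 (Multiset.mem_range.2 (by omega))
    rw [hF, Multiset.card_erase_of_mem h2, Multiset.card_erase_of_mem h1,
      Multiset.card_range]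
    simp only [Nat.pred_eq_sub_one]
    try omega
  have hcard : Multiset.card (D k p q) = k := by
    rw [hD]; simp only [Multiset.card_cons, Multiset.card_map, hcardF]; omega
  have hmap : (D k p q).map (· - 1) = (p-2) ::ₘ q ::ₘ F := by
    rw [hD]; simp [map_pred_map_succ, Nat.sub_sub]
  have htarget : ((Multiset.range (k+1)).erase (p-1)).erase (q-1) = k ::ₘ F := by
    rw [Multiset.range_succ, Multiset.erase_cons_tail _ (by omega),
      Multiset.erase_cons_tail _ (by omega)]
  rw [bulg, hcard, hmap, D, htarget, show p-1-1 = p-2 by omega, show q-1+1 = q by omega]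
  congr 1
  rw [Multiset.cons_swap k, Multiset.cons_swap k]

lemma stepB (k p : ℕ) (hp2 : 2 ≤ p) (hpk : p ≤ k) :
    bulg (D k p 0) = D k (p-1) k := by
  set G := (Multiset.range k).erase (p-1) with hG
  have hinner : ((Multiset.range (k+1)).erase p).erase 0 = G.map (· + 1) := by
    rw [range_shift, Multiset.erase_cons_tail _ (by omega), Multiset.erase_cons_head,
      show p = (p-1)+1 by omega, ← Multiset.map_erase _ succ_inj, hG]
    try simp
  have hD : D k p 0 = (p-1) ::ₘ 1 ::ₘ G.map (· + 1) := by
    rw [D, hinner, Multiset.filter_cons_of_pos _ (by omega),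
      Multiset.filter_cons_of_pos _ (by omega), filterpos_map_succ]
  have hcardG : Multiset.card G = k - 1 := by
    have h1 : (p-1) ∈ Multiset.range k := Multiset.mem_range.2 (by omega)
    rw [hG, Multiset.card_erase_of_mem h1, Multiset.card_range]
    simp only [Nat.pred_eq_sub_one]
    try omega
  have hcard : Multiset.card (D k p 0) = k + 1 := by
    rw [hD]; simp only [Multiset.card_cons, Multiset.card_map, hcardG]; omega
  have hmap : (D k p 0).map (· - 1) = (p-2) ::ₘ 0 ::ₘ G := by
    rw [hD]; simp [map_pred_map_succ, Nat.sub_sub]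
  have htarget : ((Multiset.range (k+1)).erase (p-1)).erase k = G := by
    rw [Multiset.erase_comm, Multiset.range_succ, Multiset.erase_cons_head, hG]
  rw [bulg, hcard, hmap, D, htarget, show p-1-1 = p-2 by omega,
    Multiset.cons_swap (p-2) 0, Multiset.cons_swap (k+1) 0,
    Multiset.filter_cons_of_neg _ (by omega)]
  congr 1
  rw [Multiset.cons_swap]

lemma stepC (k q : ℕ) (hq2 : 2 ≤ q) (hqk : q ≤ k) :
    bulg (D k 1 q) = D k k (q-1) := by
  set H := ((Multiset.range k).erase 0).erase (q-1) with hH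
  have hD : D k 1 q = (q+1) ::ₘ H.map (· + 1) := by
    rw [D, erase_erase k 1 q (by omega) (by omega),
      Multiset.filter_cons_of_neg _ (by omega), Multiset.filter_cons_of_pos _ (by omega),
      Multiset.filter_cons_of_neg _ (by omega), filterpos_map_succ]
    try simp [hH]
  have hcardH : Multiset.card H = k - 2 := by
    have h1 : (0:ℕ) ∈ Multiset.range k := Multiset.mem_range.2 (by omega)
    have h2 : (q-1) ∈ (Multiset.range k).erase 0 :=
      (Multiset.mem_erase_of_ne (by omega)).2 (Multiset.mem_range.2 (by omega))
    rw [hH, Multiset.card_erase_of_mem h2, Multiset.card_erase_of_mem h1,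
      Multiset.card_range]
    simp only [Nat.pred_eq_sub_one]
    try omega
  have hcard : Multiset.card (D k 1 q) = k - 1 := by
    rw [hD]; simp only [Multiset.card_cons, Multiset.card_map, hcardH]; omega
  have hmap : (D k 1 q).map (· - 1) = q ::ₘ H := by
    rw [hD]; simp [map_pred_map_succ]
  have htarget : ((Multiset.range (k+1)).erase k).erase (q-1) = 0 ::ₘ H := by
    rw [Multiset.range_succ, Multiset.erase_cons_head]
    have h0 : (0:ℕ) ∈ (Multiset.range k).erase (q-1) :=
      (Multiset.mem_erase_of_ne (by omega)).2 (Multiset.mem_range.2 (by omega))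
    rw [← Multiset.cons_erase h0, Multiset.erase_comm]
  rw [bulg, hcard, hmap, D, htarget, show q-1+1 = q by omega]
  conv_rhs => rw [Multiset.cons_swap q 0, Multiset.cons_swap (k-1) 0,
    Multiset.filter_cons_of_neg _ (by simp)]

lemma crt_core (k U v d : ℕ) (hk : 1 ≤ k) (hd : 1 ≤ d) (h : k*U = (k+1)*v + d) :
    k ≤ v + d := by
  have e : (k+1)*v = k*v + v := by ring
  have h2 : k*U = k*v + (v+d) := by linarith
  have hU : v + 1 ≤ U := by
    by_contra h'
    push_neg at h'
    have : k*U ≤ k*v := Nat.mul_le_mul_left k (by omega)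
    linarith
  have h3 : k*(v+1) ≤ k*U := Nat.mul_le_mul_left k hU
  have e2 : k*(v+1) = k*v + k := by ring
  linarith

lemma arith_ge (k s d : ℕ) (hk : 2 ≤ k) (hd : 1 ≤ d) (hdk : d ≤ k)
    (hb : s % (k+1) = s % k + d) : d + (k+1)*(k-d) ≤ s := by
  have h1 : s % k + k * (s / k) = s := Nat.mod_add_div s k
  have h2 : s % (k+1) + (k+1) * (s / (k+1)) = s := Nat.mod_add_div s (k+1)
  have h3 : k * (s / k) = (k+1) * (s / (k+1)) + d := by linarith
  have h4 : k ≤ s / (k+1) + d := crt_core k (s/k) (s/(k+1)) d (by omega) hd h3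
  have h5 : (k+1)*(k-d) ≤ (k+1)*(s/(k+1)) := Nat.mul_le_mul_left (k+1) (by omega)
  linarith [Nat.zero_le (s % k)]

lemma arith_ge0 (k s : ℕ) (hk : 2 ≤ k) (ha : s % k = k - 1) (hb : s % (k+1) = 0) :
    (k+1)*(k-1) ≤ s := by
  have h1 : s % k + k * (s / k) = s := Nat.mod_add_div s k
  have h2 : s % (k+1) + (k+1) * (s / (k+1)) = s := Nat.mod_add_div s (k+1)
  have e : k * (s/k + 1) = k * (s/k) + k := by ring
  have ht : k - 1 + 1 = k := by omega
  rw [ha] at h1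
  rw [hb] at h2
  have h3 : k * (s/k + 1) = (k+1) * (s / (k+1)) + 1 := by linarith
  have h4 : k ≤ s / (k+1) + 1 := crt_core k (s/k + 1) (s/(k+1)) 1 (by omega) le_rfl h3
  have h5 : (k+1)*(k-1) ≤ (k+1)*(s/(k+1)) := Nat.mul_le_mul_left (k+1) (by omega)
  linarith

lemma arith_no (k s : ℕ) (hk : 2 ≤ k) (hs : s < k*(k-1)) :
    s % (k+1) ≠ s % k + 1 ∧ s % (k+1) ≠ s % k + 2 ∧ ¬(s % k = k-1 ∧ s % (k+1) = 0) := by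
  have hmul : k*(k-1) ≤ (k+1)*(k-1) := Nat.mul_le_mul_right _ (by omega)
  refine ⟨?_, ?_, ?_⟩
  · intro h
    have h1 := arith_ge k s 1 hk (by omega) (by omega) h
    have e : (k+1)*(k-1) = 1 + (k+1)*(k-1) - 1 := by omega
    linarith
  · intro h
    have h1 := arith_ge k s 2 hk (by omega) (by omega) h
    obtain ⟨m, rfl⟩ : ∃ m, k = m + 2 := ⟨k - 2, by omega⟩
    have e1 : m + 2 - 1 = m + 1 := by omega
    have e2 : m + 2 - 2 = m := by omega
    rw [e2] at h1
    rw [e1] at hs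
    have e3 : (m+2)*(m+1) = 2 + (m+2+1)*m := by ring
    linarith
  · rintro ⟨h1, h2⟩
    have h3 := arith_ge0 k s hk h1 h2
    linarith

lemma D_ne_staircase (k p q : ℕ) (hp1 : 1 ≤ p) (hpk : p ≤ k) (hqk : q ≤ k)
    (hpq : p ≠ q) (hq1p : q + 1 ≠ p) : D k p q ≠ staircase k := by
  intro h
  by_cases hqk' : q = k
  · have hmem : (k+1) ∈ D k p q := by
      rw [D]
      refine Multiset.mem_filter.2 ⟨?_, by omega⟩
      rw [← hqk']
      exact Multiset.mem_cons.2 (Or.inr (Multiset.mem_cons_self _ _))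
    rw [h] at hmem
    obtain ⟨b, hb, hb2⟩ := Multiset.mem_map.1 hmem
    have := Multiset.mem_range.1 hb
    omega
  · have h2 : Multiset.count (q+1) (staircase k) ≤ 1 :=
      Multiset.nodup_iff_count_le_one.1
        (Multiset.Nodup.map succ_inj (Multiset.nodup_range k)) _
    have hqE : (q+1) ∈ ((Multiset.range (k+1)).erase p).erase q :=
      (Multiset.mem_erase_of_ne (by omega)).2
        ((Multiset.mem_erase_of_ne (by omega)).2 (Multiset.mem_range.2 (by omega)))
    have hc := Multiset.count_pos.2 hqE
    have h3 : 2 ≤ Multiset.count (q+1) (D k p q) := by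
      rw [D, Multiset.count_filter, if_pos (by omega : (0:ℕ) < q+1),
        Multiset.count_cons, Multiset.count_cons, if_pos rfl]
      omega
    rw [h] at h3
    omega

lemma orbit (k : ℕ) (hk : 2 ≤ k) : ∀ s, s ≤ k*(k-1) →
    bulg^[s] (tau k) = D k (k - s % k) ((k+1 - s % (k+1)) % (k+1)) := by
  intro s
  induction s with
  | zero =>
      intro _
      simp only [Function.iterate_zero_apply, Nat.zero_mod, Nat.sub_zero, Nat.mod_self]
      exact tau_eq_D k hk
  | succ s ih =>
      intro hs
      have hs' : s < k*(k-1) := by omega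
      rw [Function.iterate_succ_apply', ih (by omega)]
      obtain ⟨h1, h2, h3⟩ := arith_no k s hk hs'
      set a := s % k with ha
      set b := s % (k+1) with hb
      have hak : a < k := Nat.mod_lt _ (by omega)
      have hbk : b < k+1 := Nat.mod_lt _ (by omega)
      have hsucca : (s+1) % k = if a + 1 = k then 0 else a + 1 := by
        rw [Nat.add_mod, ← ha, Nat.mod_eq_of_lt (show 1 < k by omega)]
        split
        · next hcase => rw [hcase, Nat.mod_self]
        · next hcase => exact Nat.mod_eq_of_lt (by omega)
      have hsuccb : (s+1) % (k+1) = if b + 1 = k+1 then 0 else b + 1 := by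
        rw [Nat.add_mod, ← hb, Nat.mod_eq_of_lt (show 1 < k+1 by omega)]
        split
        · next hcase => rw [hcase, Nat.mod_self]
        · next hcase => exact Nat.mod_eq_of_lt (by omega)
      by_cases hb0 : b = 0
      · -- case B : q = 0, p = k - a ≥ 2
        have hq : (k+1-b) % (k+1) = 0 := by rw [hb0, Nat.sub_zero, Nat.mod_self]
        rw [hq, stepB k (k-a) (by omega) (by omega), hsucca, hsuccb]
        rw [if_neg (by omega), if_neg (by omega)]
        have e1 : k - a - 1 = k - (a+1) := by omega
        have e2 : (k + 1 - (b+1)) % (k+1) = k := by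
          rw [hb0]; exact Nat.mod_eq_of_lt (by omega)
        rw [e1, e2]
      · by_cases hp1 : a = k - 1
        · -- case C : p = 1, q = k+1-b ≥ 2
          have hq : (k+1-b) % (k+1) = k+1-b := Nat.mod_eq_of_lt (by omega)
          have hbk1 : b ≤ k - 1 := by omega   -- b = k would give q = 1 = p, i.e. b = a+1
          rw [hq, show k - a = 1 by omega, stepC k (k+1-b) (by omega) (by omega),
            hsucca, hsuccb, if_pos (by omega), if_neg (by omega), Nat.sub_zero]
          have e2 : (k + 1 - (b+1)) % (k+1) = k - b := by
            rw [Nat.mod_eq_of_lt (by omega)]; omega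
          rw [e2, show k + 1 - b - 1 = k - b by omega]
        · -- case A
          have hq : (k+1-b) % (k+1) = k+1-b := Nat.mod_eq_of_lt (by omega)
          rw [hq, stepA k (k-a) (k+1-b) (by omega) (by omega) (by omega) (by omega)
            (by omega), hsucca, hsuccb, if_neg (by omega)]
          by_cases hbtop : b + 1 = k + 1
          · rw [if_pos hbtop]
            have e1 : k - a - 1 = k - (a+1) := by omega
            have e2 : k + 1 - b - 1 = 0 := by omega
            rw [e1, e2, Nat.sub_zero, Nat.mod_self]
          · rw [if_neg hbtop]
            have e1 : k - a - 1 = k - (a+1) := by omega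
            have e2 : k + 1 - b - 1 = (k + 1 - (b+1)) % (k+1) := by
              rw [Nat.mod_eq_of_lt (by omega)]; omega
            rw [e1, e2]

/-- Toom: the minimal number of moves needed to go from τ to the staircase
partition is exactly k(k-1). -/
theorem tau_min_moves (k : ℕ) (hk : 2 ≤ k) :
    IsLeast {s : ℕ | bulg^[s] (tau k) = staircase k} (k * (k - 1)) := by
  constructor
  · show bulg^[k*(k-1)] (tau k) = staircase k
    rw [orbit k hk _ le_rfl]
    have h1 : k*(k-1) % k = 0 := Nat.mul_mod_right k (k-1)
    have h2 : k*(k-1) % (k+1) = 2 := by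
      have e : k*(k-1) = 2 + (k+1)*(k-2) := by
        obtain ⟨m, rfl⟩ : ∃ m, k = m + 2 := ⟨k - 2, by omega⟩
        rw [show m+2-1 = m+1 by omega, show m+2-2 = m by omega]
        ring
      rw [e, Nat.add_mul_mod_self_left]
      exact Nat.mod_eq_of_lt (by omega)
    rw [h1, h2, Nat.sub_zero, show (k+1-2) % (k+1) = k - 1 by
      rw [Nat.mod_eq_of_lt (by omega)]; omega]
    exact D_staircase k k (by omega) le_rfl
  · intro s hs
    by_contra hlt
    push_neg at hlt
    have horb := orbit k hk s (le_of_lt hlt)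
    obtain ⟨h1, h2, h3⟩ := arith_no k s hk hlt
    have hak : s % k < k := Nat.mod_lt _ (by omega)
    have hbk : s % (k+1) < k+1 := Nat.mod_lt _ (by omega)
    have hs' : bulg^[s] (tau k) = staircase k := hs
    rw [horb] at hs'
    by_cases hb0 : s % (k+1) = 0
    · rw [hb0, Nat.sub_zero, Nat.mod_self] at hs'
      exact D_ne_staircase k (k - s % k) 0 (by omega) (by omega) (by omega)
        (by omega) (by omega) hs'
    · rw [Nat.mod_eq_of_lt (show k+1 - s%(k+1) < k+1 by omega)] at hs'
      exact D_ne_staircase k (k - s % k) (k+1 - s%(k+1)) (by omega) (by omega)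
        (by omega) (by omega) (by omega) hs'
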